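/- For n≥2, there is a surjective group homomorphism f: B(Ã_n) → B(A_n) sending σ_i ↦ σ_i for 1≤i≤n and a_{n+1} ↦ σ_n^{-1}σ_{n-1}^{-1}⋯σ_2^{-1}σ_1σ_2⋯σ_{n-1}σ_n, and its kernel equals the normal closure N_e in B(Ã_n) of the single element e = a_{n+1}^{-1}σ_n^{-1}σ_{n-1}^{-1}⋯σ_2^{-1}σ_1σ_2⋯σ_{n-1}σ_n; consequently the quotient B(Ã_n)/N_e is isomorphic to B(A_n). -/

import Mathlib

/-- Relators of the `A`-type braid group `B(A n)`: generator `i : Fin n` stands for `σ_{i+1}`. -/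
def braidRelsA (n : ℕ) : Set (FreeGroup (Fin n)) :=
  { r | (∃ i j : Fin n, (i : ℕ) + 2 ≤ (j : ℕ) ∧
          r = FreeGroup.of i * FreeGroup.of j * (FreeGroup.of j * FreeGroup.of i)⁻¹) ∨
        (∃ i j : Fin n, (j : ℕ) = (i : ℕ) + 1 ∧
          r = FreeGroup.of i * FreeGroup.of j * FreeGroup.of i *
              (FreeGroup.of j * FreeGroup.of i * FreeGroup.of j)⁻¹) }

/-- The `A`-type braid group `B(A_n)` with `n` generators `σ_1, …, σ_n`. -/
abbrev BraidA (n : ℕ) : Type := PresentedGroup (braidRelsA n)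

/-- Relators of the affine braid group `B(Ã_n)`: generator `some i` (`i : Fin n`)
stands for `σ_{i+1}`, and `none` stands for `a_{n+1}`. -/
def braidRelsAff (n : ℕ) : Set (FreeGroup (Option (Fin n))) :=
  { r | (∃ i j : Fin n, (i : ℕ) + 2 ≤ (j : ℕ) ∧
          r = FreeGroup.of (some i) * FreeGroup.of (some j) *
              (FreeGroup.of (some j) * FreeGroup.of (some i))⁻¹) ∨
        (∃ i j : Fin n, (j : ℕ) = (i : ℕ) + 1 ∧
          r = FreeGroup.of (some i) * FreeGroup.of (some j) * FreeGroup.of (some i) *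
              (FreeGroup.of (some j) * FreeGroup.of (some i) * FreeGroup.of (some j))⁻¹) ∨
        (∃ i : Fin n, 1 ≤ (i : ℕ) ∧ (i : ℕ) + 2 ≤ n ∧
          r = FreeGroup.of (some i) * FreeGroup.of none *
              (FreeGroup.of none * FreeGroup.of (some i))⁻¹) ∨
        (∃ i : Fin n, ((i : ℕ) = 0 ∨ (i : ℕ) + 1 = n) ∧
          r = FreeGroup.of (some i) * FreeGroup.of none * FreeGroup.of (some i) *
              (FreeGroup.of none * FreeGroup.of (some i) * FreeGroup.of none)⁻¹) }

/-- The affine (`Ã`-type) braid group `B(Ã_n)`, with generators `σ_1, …, σ_n` and `a_{n+1}`. -/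
abbrev BraidAff (n : ℕ) : Type := PresentedGroup (braidRelsAff n)

/-- `b = σ_n⁻¹ σ_{n-1}⁻¹ ⋯ σ_2⁻¹ σ_1 σ_2 ⋯ σ_{n-1} σ_n` in `B(A_n)`. -/
noncomputable def bA (n : ℕ) (h : 0 < n) : BraidA n :=
  ((((List.finRange n).drop 1).map fun i => (PresentedGroup.of i : BraidA n)).prod)⁻¹ *
    PresentedGroup.of (⟨0, h⟩ : Fin n) *
    (((List.finRange n).drop 1).map fun i => (PresentedGroup.of i : BraidA n)).prod

/-- The word `σ_n⁻¹ σ_{n-1}⁻¹ ⋯ σ_2⁻¹ σ_1 σ_2 ⋯ σ_{n-1} σ_n`, read in `B(Ã_n)`. -/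
noncomputable def bAff (n : ℕ) (h : 0 < n) : BraidAff n :=
  ((((List.finRange n).drop 1).map fun i => (PresentedGroup.of (some i) : BraidAff n)).prod)⁻¹ *
    PresentedGroup.of (some (⟨0, h⟩ : Fin n)) *
    (((List.finRange n).drop 1).map fun i => (PresentedGroup.of (some i) : BraidAff n)).prod

/-- `e = a_{n+1}⁻¹ σ_n⁻¹ ⋯ σ_2⁻¹ σ_1 σ_2 ⋯ σ_n` in `B(Ã_n)`. -/
noncomputable def eAff (n : ℕ) (h : 0 < n) : BraidAff n :=
  (PresentedGroup.of none)⁻¹ * bAff n h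

section KeyLemmas
variable {G : Type*} [Group G]

theorem commConj (u c x : G) (h1 : x*c = c*x) (h2 : x*u = u*x) :
    x*(c⁻¹*u*c) = (c⁻¹*u*c)*x := by
  have h1' : x*c⁻¹ = c⁻¹*x := by rw [mul_inv_eq_iff_eq_mul, mul_assoc, h1]; group
  calc x*(c⁻¹*u*c) = (x*c⁻¹)*u*c := by group
  _ = (c⁻¹*x)*u*c := by rw [h1']
  _ = c⁻¹*(x*u)*c := by group
  _ = c⁻¹*(u*x)*c := by rw [h2]
  _ = (c⁻¹*u)*(x*c) := by group
  _ = (c⁻¹*u)*(c*x) := by rw [h1]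
  _ = (c⁻¹*u*c)*x := by group

theorem conjStep (u c x : G) (h1 : x*c = c*x) (h2 : x*u*x = u*x*u) :
    x*(c⁻¹*u*c)*x = (c⁻¹*u*c)*x*(c⁻¹*u*c) := by
  have h1' : x*c⁻¹ = c⁻¹*x := by rw [mul_inv_eq_iff_eq_mul, mul_assoc, h1]; group
  have l : x*(c⁻¹*u*c)*x = c⁻¹*(u*x*u)*c := by
    calc x*(c⁻¹*u*c)*x = (x*c⁻¹)*u*(c*x) := by group
    _ = (c⁻¹*x)*u*(x*c) := by rw [h1', ← h1]
    _ = c⁻¹*(x*u*x)*c := by group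
    _ = c⁻¹*(u*x*u)*c := by rw [h2]
  have r : (c⁻¹*u*c)*x*(c⁻¹*u*c) = c⁻¹*(u*x*u)*c := by
    calc (c⁻¹*u*c)*x*(c⁻¹*u*c) = (c⁻¹*u)*(c*x)*(c⁻¹*(u*c)) := by group
    _ = (c⁻¹*u)*(x*c)*(c⁻¹*(u*c)) := by rw [← h1]
    _ = c⁻¹*(u*x*u)*c := by group
  rw [l, r]

theorem keyC (s t : G) (hst : s*t*s = t*s*t) :
    s*(t⁻¹*s*t)*s = (t⁻¹*s*t)*s*(t⁻¹*s*t) := by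
  have l : s*(t⁻¹*s*t)*s = s*t⁻¹*(t*s*t) := by
    calc s*(t⁻¹*s*t)*s = s*t⁻¹*(s*t*s) := by group
    _ = s*t⁻¹*(t*s*t) := by rw [hst]
  have r : (t⁻¹*s*t)*s*(t⁻¹*s*t) = t⁻¹*(t*s*t)*(t⁻¹*(s*t)) := by
    calc (t⁻¹*s*t)*s*(t⁻¹*s*t) = t⁻¹*(s*t*s)*(t⁻¹*(s*t)) := by group
    _ = t⁻¹*(t*s*t)*(t⁻¹*(s*t)) := by rw [hst]
  rw [l, r]; group

theorem keyA' (u t : G) (h : t*u*t = u*t*u) :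
    t*(t⁻¹*u*t)*t = (t⁻¹*u*t)*t*(t⁻¹*u*t) := by
  have r : (t⁻¹*u*t)*t*(t⁻¹*u*t) = t⁻¹*(t*u*t)*t := by
    calc (t⁻¹*u*t)*t*(t⁻¹*u*t) = t⁻¹*(u*t*u)*t := by group
    _ = t⁻¹*(t*u*t)*t := by rw [← h]
  rw [r]; group

theorem keyB (v s t : G) (hvt : v*t = t*v) (hst : s*t*s = t*s*t) :
    s * (t⁻¹*(s⁻¹*v*s)*t) = (t⁻¹*(s⁻¹*v*s)*t) * s := by
  have l : s*t*(s*(t⁻¹*(s⁻¹*v*s)*t)) = t*(v*(s*t)) := by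
    calc s*t*(s*(t⁻¹*(s⁻¹*v*s)*t)) = (s*t*s)*t⁻¹*s⁻¹*v*(s*t) := by group
    _ = (t*s*t)*t⁻¹*s⁻¹*v*(s*t) := by rw [hst]
    _ = t*(v*(s*t)) := by group
  have r : s*t*((t⁻¹*(s⁻¹*v*s)*t)*s) = t*(v*(s*t)) := by
    calc s*t*((t⁻¹*(s⁻¹*v*s)*t)*s) = v*(s*t*s) := by group
    _ = v*(t*s*t) := by rw [hst]
    _ = (v*t)*(s*t) := by group
    _ = (t*v)*(s*t) := by rw [hvt]
    _ = t*(v*(s*t)) := by group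
  exact mul_left_cancel (l.trans r.symm)

theorem keyA (u s t : G) (hut : u*t = t*u) (hst : s*t*s = t*s*t) (hus : s*u*s = u*s*u) :
    t*(s⁻¹*u*s)*t = (s⁻¹*u*s)*t*(s⁻¹*u*s) := by
  have e1 : s*t*s⁻¹ = t⁻¹*(s*t) := by
    rw [mul_inv_eq_iff_eq_mul]
    calc s*t = t⁻¹*(t*s*t) := by group
    _ = t⁻¹*(s*t*s) := by rw [hst]
    _ = t⁻¹*(s*t)*s := by group
  have hut2 : u*t⁻¹ = t⁻¹*u := by
    rw [mul_inv_eq_iff_eq_mul, mul_assoc, hut]; group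
  have l : s*(t*(s⁻¹*u*s)*t)*s = t⁻¹*(s*u)*((s*t*s)*s) := by
    calc s*(t*(s⁻¹*u*s)*t)*s = (s*t*s⁻¹)*(u*(s*t*s)) := by group
    _ = (t⁻¹*(s*t))*(u*(t*s*t)) := by rw [e1, hst]
    _ = t⁻¹*s*(t*u)*(t*s*t) := by group
    _ = t⁻¹*s*(u*t)*(t*s*t) := by rw [← hut]
    _ = t⁻¹*(s*u)*(t*(t*s*t)) := by group
    _ = t⁻¹*(s*u)*(t*(s*t*s)) := by rw [← hst]
    _ = t⁻¹*(s*u)*((t*s*t)*s) := by group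
    _ = t⁻¹*(s*u)*((s*t*s)*s) := by rw [← hst]
  have r : s*((s⁻¹*u*s)*t*(s⁻¹*u*s))*s = t⁻¹*(s*u)*((s*t*s)*s) := by
    calc s*((s⁻¹*u*s)*t*(s⁻¹*u*s))*s = u*(s*t*s⁻¹)*(u*(s*s)) := by group
    _ = u*(t⁻¹*(s*t))*(u*(s*s)) := by rw [e1]
    _ = (u*t⁻¹)*(s*(t*u))*(s*s) := by group
    _ = (t⁻¹*u)*(s*(u*t))*(s*s) := by rw [hut2, ← hut]
    _ = t⁻¹*(u*s*u)*(t*(s*s)) := by group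
    _ = t⁻¹*(s*u*s)*(t*(s*s)) := by rw [← hus]
    _ = t⁻¹*(s*u)*((s*t*s)*s) := by group
  exact mul_left_cancel (mul_right_cancel (l.trans r.symm))

end KeyLemmas

section DseqDev
variable {G : Type*} [Group G]

def Dseq (s : ℕ → G) : ℕ → G
  | 0 => s 0
  | (m+1) => (s (m+1))⁻¹ * Dseq s m * s (m+1)

variable (s : ℕ → G) (n : ℕ)
variable (hcomm : ∀ i j : ℕ, i + 2 ≤ j → j < n → s i * s j = s j * s i)
variable (hbraid : ∀ i : ℕ, i + 1 < n → s i * s (i+1) * s i = s (i+1) * s i * s (i+1))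

set_option linter.unusedSectionVars false

include hcomm hbraid

theorem Dseq_comm (m j : ℕ) (h1 : m + 2 ≤ j) (h2 : j < n) :
    s j * Dseq s m = Dseq s m * s j := by
  induction m with
  | zero => exact (hcomm 0 j h1 h2).symm
  | succ m IH =>
      exact commConj (Dseq s m) (s (m+1)) (s j)
        ((hcomm (m+1) j (by omega) h2).symm) (IH (by omega))

theorem DseqA (m : ℕ) (h : m + 1 < n) :
    s (m+1) * Dseq s m * s (m+1) = Dseq s m * s (m+1) * Dseq s m := by
  induction m with
  | zero => exact (hbraid 0 h).symm
  | succ m IH =>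
      exact keyA (Dseq s m) (s (m+1)) (s (m+2))
        (Dseq_comm s n hcomm hbraid m (m+2) le_rfl h).symm
        (hbraid (m+1) h) (IH (by omega))

theorem DseqC (m : ℕ) (h1 : 1 ≤ m) (h2 : m < n) :
    s 0 * Dseq s m * s 0 = Dseq s m * s 0 * Dseq s m := by
  induction m with
  | zero => omega
  | succ m IH =>
      rcases Nat.eq_zero_or_pos m with rfl | hm
      · exact keyC (s 0) (s 1) (hbraid 0 h2)
      · exact conjStep (Dseq s m) (s (m+1)) (s 0)
          ((hcomm 0 (m+1) (by omega) h2)) (IH hm (by omega))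

theorem DseqB (j m : ℕ) (h1 : 1 ≤ j) (h2 : j + 1 ≤ m) (h3 : m < n) :
    s j * Dseq s m = Dseq s m * s j := by
  induction m with
  | zero => omega
  | succ m IH =>
      rcases eq_or_lt_of_le h2 with heq | hlt
      · obtain ⟨q, rfl⟩ : ∃ q, j = q + 1 := ⟨j - 1, by omega⟩
        have hm : m = q + 1 := by omega
        subst hm
        exact keyB (Dseq s q) (s (q+1)) (s (q+2))
          (Dseq_comm s n hcomm hbraid q (q+2) le_rfl h3).symm
          (hbraid (q+1) h3)
      · exact commConj (Dseq s m) (s (m+1)) (s j)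
          (hcomm j (m+1) (by omega) h3) (IH (by omega) (by omega))

omit hcomm hbraid in
theorem Dseq_eq_prod (m : ℕ) :
    Dseq s m = ((((List.range (m+1)).drop 1).map s).prod)⁻¹ * s 0 *
      (((List.range (m+1)).drop 1).map s).prod := by
  induction m with
  | zero => simp [Dseq]
  | succ m IH =>
      have hd : ((List.range (m+1+1)).drop 1) = ((List.range (m+1)).drop 1) ++ [m+1] := by
        rw [List.range_succ, List.drop_append_of_le_length (by simp)]
      rw [show Dseq s (m+1) = (s (m+1))⁻¹ * Dseq s m * s (m+1) from rfl, IH, hd]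
      simp [mul_assoc]

end DseqDev

section PG
variable {α : Type*} {rels : Set (FreeGroup α)}

theorem presented_rel {a b : FreeGroup α} (h : a * b⁻¹ ∈ rels) :
    PresentedGroup.mk rels a = PresentedGroup.mk rels b := by
  have h1 : PresentedGroup.mk rels (a * b⁻¹) = 1 :=
    (QuotientGroup.eq_one_iff _).mpr (Subgroup.subset_normalClosure h)
  rw [map_mul, map_inv, mul_inv_eq_one] at h1
  exact h1

end PG

section BraidRels
variable {n : ℕ}

theorem relA_comm (i j : Fin n) (h : (i : ℕ) + 2 ≤ (j : ℕ)) :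
    (PresentedGroup.of i : BraidA n) * PresentedGroup.of j =
      PresentedGroup.of j * PresentedGroup.of i := by
  have := presented_rel (rels := braidRelsA n)
    (a := FreeGroup.of i * FreeGroup.of j) (b := FreeGroup.of j * FreeGroup.of i)
    (Or.inl ⟨i, j, h, rfl⟩)
  rw [map_mul, map_mul] at this
  exact this

theorem relA_braid (i j : Fin n) (h : (j : ℕ) = (i : ℕ) + 1) :
    (PresentedGroup.of i : BraidA n) * PresentedGroup.of j * PresentedGroup.of i =
      PresentedGroup.of j * PresentedGroup.of i * PresentedGroup.of j := by
  have := presented_rel (rels := braidRelsA n)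
    (a := FreeGroup.of i * FreeGroup.of j * FreeGroup.of i)
    (b := FreeGroup.of j * FreeGroup.of i * FreeGroup.of j)
    (Or.inr ⟨i, j, h, rfl⟩)
  rw [map_mul, map_mul, map_mul, map_mul] at this
  exact this

theorem relAff_comm (i j : Fin n) (h : (i : ℕ) + 2 ≤ (j : ℕ)) :
    (PresentedGroup.of (some i) : BraidAff n) * PresentedGroup.of (some j) =
      PresentedGroup.of (some j) * PresentedGroup.of (some i) := by
  have := presented_rel (rels := braidRelsAff n)
    (a := FreeGroup.of (some i) * FreeGroup.of (some j))
    (b := FreeGroup.of (some j) * FreeGroup.of (some i))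
    (Or.inl ⟨i, j, h, rfl⟩)
  rw [map_mul, map_mul] at this
  exact this

theorem relAff_braid (i j : Fin n) (h : (j : ℕ) = (i : ℕ) + 1) :
    (PresentedGroup.of (some i) : BraidAff n) * PresentedGroup.of (some j) *
        PresentedGroup.of (some i) =
      PresentedGroup.of (some j) * PresentedGroup.of (some i) * PresentedGroup.of (some j) := by
  have := presented_rel (rels := braidRelsAff n)
    (a := FreeGroup.of (some i) * FreeGroup.of (some j) * FreeGroup.of (some i))
    (b := FreeGroup.of (some j) * FreeGroup.of (some i) * FreeGroup.of (some j))
    (Or.inr (Or.inl ⟨i, j, h, rfl⟩))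
  rw [map_mul, map_mul, map_mul, map_mul] at this
  exact this

end BraidRels

section SA
variable (n : ℕ)

/-- The clamped generator sequence in `BraidA n`. -/
noncomputable def sA : ℕ → BraidA n := fun k =>
  if h : k < n then (PresentedGroup.of (⟨k, h⟩ : Fin n) : BraidA n) else 1

theorem sA_lt {k : ℕ} (h : k < n) : sA n k = PresentedGroup.of (⟨k, h⟩ : Fin n) := dif_pos h

theorem sA_coe (i : Fin n) : sA n (i : ℕ) = PresentedGroup.of i := by
  rw [sA_lt n i.isLt]

theorem hcommA : ∀ i j : ℕ, i + 2 ≤ j → j < n → sA n i * sA n j = sA n j * sA n i := by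
  intro i j hij hj
  rw [sA_lt n (by omega : i < n), sA_lt n hj]
  exact relA_comm ⟨i, by omega⟩ ⟨j, hj⟩ hij

theorem hbraidA : ∀ i : ℕ, i + 1 < n →
    sA n i * sA n (i+1) * sA n i = sA n (i+1) * sA n i * sA n (i+1) := by
  intro i hi
  rw [sA_lt n (by omega : i < n), sA_lt n hi]
  exact relA_braid ⟨i, by omega⟩ ⟨i+1, hi⟩ rfl

theorem finRange_map_eq {G : Type*} [Group G] (σ : Fin n → G) (s : ℕ → G)
    (hs : ∀ i : Fin n, s (i : ℕ) = σ i) :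
    ((List.finRange n).drop 1).map σ = ((List.range n).drop 1).map s := by
  have h1 : (List.finRange n).map σ = (List.range n).map s := by
    rw [← List.map_coe_finRange_eq_range, List.map_map]
    apply List.map_congr_left
    intro i _
    exact (hs i).symm
  rw [List.map_drop, List.map_drop, h1]

theorem bA_eq (h : 0 < n) : bA n h = Dseq (sA n) (n-1) := by
  rw [bA, Dseq_eq_prod]
  rw [Nat.sub_add_cancel h]
  rw [finRange_map_eq n _ (sA n) (fun i => sA_coe n i)]
  rw [sA_lt n h]

end SA


/-- The target of `σ_i`s and `a_{n+1}` in `B(A_n)`. -/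
noncomputable def Fmap (n : ℕ) (h : 0 < n) : Option (Fin n) → BraidA n
  | none => bA n h
  | some i => PresentedGroup.of i

@[simp] theorem Fmap_none (n : ℕ) (h : 0 < n) : Fmap n h none = bA n h := rfl
@[simp] theorem Fmap_some (n : ℕ) (h : 0 < n) (i : Fin n) :
    Fmap n h (some i) = PresentedGroup.of i := rfl

theorem stmt_8 (n : ℕ) (hn : 2 ≤ n) :
    ∃ f : BraidAff n →* BraidA n,
      (∀ i : Fin n, f (PresentedGroup.of (some i)) = PresentedGroup.of i) ∧
      f (PresentedGroup.of none) = bA n (by omega) ∧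
      Function.Surjective f ∧
      f.ker = Subgroup.normalClosure {eAff n (by omega)} ∧
      Nonempty ((BraidAff n ⧸ Subgroup.normalClosure {eAff n (by omega)}) ≃* BraidA n) := by
  have h0 : 0 < n := by omega
  have hF : ∀ r ∈ braidRelsAff n, FreeGroup.lift (Fmap n h0) r = 1 := by
    rintro r (⟨i, j, hij, rfl⟩ | ⟨i, j, hij, rfl⟩ | ⟨i, hi1, hi2, rfl⟩ | ⟨i, hi, rfl⟩) <;>
      simp only [map_mul, map_inv, FreeGroup.lift_apply_of, Fmap_none, Fmap_some, mul_inv_eq_one]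
    · exact relA_comm i j hij
    · exact relA_braid i j hij
    · rw [bA_eq n h0, ← sA_coe n i]
      exact DseqB (sA n) n (hcommA n) (hbraidA n) i (n-1) hi1 (by omega) (by omega)
    · rcases hi with hi0 | hin
      · have hieq : i = ⟨0, h0⟩ := Fin.ext hi0
        rw [bA_eq n h0, hieq, ← sA_lt n h0]
        exact DseqC (sA n) n (hcommA n) (hbraidA n) (n-1) (by omega) (by omega)
      · have hof : PresentedGroup.of i = sA n (n-1) := by
          rw [← sA_coe n i]; congr 1; omega
        rw [bA_eq n h0, hof]
        obtain ⟨m, hm⟩ : ∃ m, n - 1 = m + 1 := ⟨n - 2, by omega⟩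
        rw [hm]
        exact keyA' (Dseq (sA n) m) (sA n (m+1))
          (DseqA (sA n) n (hcommA n) (hbraidA n) m (by omega))
  set f : BraidAff n →* BraidA n := PresentedGroup.toGroup hF with hfdef
  have hf_some : ∀ i : Fin n, f (PresentedGroup.of (some i)) = PresentedGroup.of i :=
    fun i => PresentedGroup.toGroup.of hF
  have hf_none : f (PresentedGroup.of none) = bA n h0 := PresentedGroup.toGroup.of hF
  have hf_bAff : f (bAff n h0) = bA n h0 := by
    rw [bAff, bA]
    simp only [map_mul, map_inv, map_list_prod, List.map_map]
    have hl : List.map (⇑f ∘ fun i => (PresentedGroup.of (some i) : BraidAff n))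
        ((List.finRange n).drop 1) =
        List.map PresentedGroup.of ((List.finRange n).drop 1) :=
      List.map_congr_left (fun i _ => hf_some i)
    rw [hl, hf_some]
  set N : Subgroup (BraidAff n) := Subgroup.normalClosure {eAff n h0} with hNdef
  have hfe : f (eAff n h0) = 1 := by
    rw [eAff, map_mul, map_inv, hf_none, hf_bAff, inv_mul_cancel]
  have hNker : N ≤ f.ker := by
    apply Subgroup.normalClosure_le_normal
    intro x hx
    rw [Set.mem_singleton_iff] at hx
    subst hx
    exact MonoidHom.mem_ker.mpr hfe
  set π : BraidAff n →* BraidAff n ⧸ N := QuotientGroup.mk' N with hπdef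
  set fbar : (BraidAff n ⧸ N) →* BraidA n := QuotientGroup.lift N f hNker with hfbardef
  have hfbar : ∀ x, fbar (π x) = f x := fun x => rfl
  have hG : ∀ r ∈ braidRelsA n,
      FreeGroup.lift (fun i => π (PresentedGroup.of (some i))) r = 1 := by
    rintro r (⟨i, j, hij, rfl⟩ | ⟨i, j, hij, rfl⟩) <;>
      simp only [map_mul, map_inv, FreeGroup.lift_apply_of, mul_inv_eq_one]
    · rw [← map_mul, ← map_mul]
      exact congrArg π (relAff_comm i j hij)
    · rw [← map_mul, ← map_mul, ← map_mul, ← map_mul]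
      exact congrArg π (relAff_braid i j hij)
  set g : BraidA n →* (BraidAff n ⧸ N) := PresentedGroup.toGroup hG with hgdef
  have hg_of : ∀ i : Fin n, g (PresentedGroup.of i) = π (PresentedGroup.of (some i)) :=
    fun i => PresentedGroup.toGroup.of hG
  have hπe : π (eAff n h0) = 1 :=
    (QuotientGroup.eq_one_iff _).mpr (Subgroup.subset_normalClosure (Set.mem_singleton _))
  have hπ_none : π (PresentedGroup.of none) = π (bAff n h0) := by
    unfold eAff at hπe
    rw [map_mul, map_inv, inv_mul_eq_one] at hπe
    exact hπe
  have hg_bA : g (bA n h0) = π (bAff n h0) := by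
    rw [bA, bAff]
    simp only [map_mul, map_inv, map_list_prod, List.map_map]
    have hl : List.map (⇑g ∘ fun i => (PresentedGroup.of i : BraidA n))
        ((List.finRange n).drop 1) =
        List.map (⇑π ∘ fun i => (PresentedGroup.of (some i) : BraidAff n))
        ((List.finRange n).drop 1) :=
      List.map_congr_left (fun i _ => hg_of i)
    rw [hl, hg_of]
  have hgf_comp : g.comp f = π := by
    apply PresentedGroup.ext
    rintro (_ | i)
    · show g (f (PresentedGroup.of none)) = π (PresentedGroup.of none)
      rw [hf_none, hg_bA, hπ_none]
    · show g (f (PresentedGroup.of (some i))) = π (PresentedGroup.of (some i))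
      rw [hf_some, hg_of]
  have hfg_comp : fbar.comp g = MonoidHom.id (BraidA n) := by
    apply PresentedGroup.ext
    intro i
    show fbar (g (PresentedGroup.of i)) = PresentedGroup.of i
    rw [hg_of]
    exact (hfbar _).trans (hf_some i)
  have hgfbar : ∀ y, g (fbar y) = y := by
    intro y
    obtain ⟨x, rfl⟩ := QuotientGroup.mk'_surjective N y
    calc g (fbar (π x)) = g (f x) := by rw [hfbar]
    _ = (g.comp f) x := rfl
    _ = π x := by rw [hgf_comp]
  have hfbarg : ∀ z, fbar (g z) = z := fun z => DFunLike.congr_fun hfg_comp z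
  have hsurj : Function.Surjective f := by
    intro z
    obtain ⟨x, hx⟩ := QuotientGroup.mk'_surjective N (g z)
    refine ⟨x, ?_⟩
    rw [← hfbar x]
    show fbar (π x) = z
    rw [show π x = g z from hx, hfbarg]
  have hker : f.ker = N := by
    ext x
    constructor
    · intro hx
      have hx1 : f x = 1 := hx
      have hπx : π x = 1 := by
        calc π x = g (fbar (π x)) := (hgfbar (π x)).symm
        _ = g (f x) := by rw [hfbar]
        _ = 1 := by rw [hx1, map_one]
      exact (QuotientGroup.eq_one_iff x).mp hπx
    · intro hx
      exact hNker hx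
  have hiso : Nonempty ((BraidAff n ⧸ N) ≃* BraidA n) := by
    have h1 : g.comp fbar = MonoidHom.id _ := MonoidHom.ext hgfbar
    exact ⟨MonoidHom.toMulEquiv fbar g h1 hfg_comp⟩
  exact ⟨f, hf_some, hf_none, hsurj, hker, hiso⟩
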